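/- arXiv:2308.10048 — 2 statements merged into one kernel-verified Lean document; each statement's English description precedes it below -/
import Mathlib

section
/- Let S(A) := (1 + |A|)^{q-2} A for 1 < q < ∞. Then S is strictly monotone: for all symmetric 3×3 real matrices A ≠ B, one has (S(A) − S(B)) : (A − B) > 0. -/
open scoped BigOperators

/-- Frobenius inner product of 3×3 real matrices. -/
noncomputable def frobInner (A B : Matrix (Fin 3) (Fin 3) ℝ) : ℝ :=
  ∑ i, ∑ j, A i j * B i j

/-- Frobenius norm of a 3×3 real matrix. -/
noncomputable def frobNorm (A : Matrix (Fin 3) (Fin 3) ℝ) : ℝ :=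
  Real.sqrt (∑ i, ∑ j, (A i j) ^ 2)

/-- The viscous stress tensor S(A) = (1 + |A|)^(q-2) A. -/
noncomputable def stressS (q : ℝ) (A : Matrix (Fin 3) (Fin 3) ℝ) :
    Matrix (Fin 3) (Fin 3) ℝ :=
  ((1 + frobNorm A) ^ (q - 2) : ℝ) • A

lemma frobNorm_nonneg (A : Matrix (Fin 3) (Fin 3) ℝ) : 0 ≤ frobNorm A :=
  Real.sqrt_nonneg _

lemma frobInner_self (A : Matrix (Fin 3) (Fin 3) ℝ) :
    frobInner A A = frobNorm A * frobNorm A := by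
  rw [frobNorm, Real.mul_self_sqrt (by positivity), frobInner]
  exact Finset.sum_congr rfl fun i _ => Finset.sum_congr rfl fun j _ => by ring

lemma frobInner_le (A B : Matrix (Fin 3) (Fin 3) ℝ) :
    frobInner A B ≤ frobNorm A * frobNorm B := by
  have h1 : frobInner A B = ∑ p : Fin 3 × Fin 3, A p.1 p.2 * B p.1 p.2 := by
    rw [frobInner, Fintype.sum_prod_type]
  have h2 : frobNorm A = Real.sqrt (∑ p : Fin 3 × Fin 3, (A p.1 p.2) ^ 2) := by
    rw [frobNorm, Fintype.sum_prod_type]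
  have h3 : frobNorm B = Real.sqrt (∑ p : Fin 3 × Fin 3, (B p.1 p.2) ^ 2) := by
    rw [frobNorm, Fintype.sum_prod_type]
  have hcs := Finset.sum_mul_sq_le_sq_mul_sq Finset.univ
    (fun p : Fin 3 × Fin 3 => A p.1 p.2) (fun p : Fin 3 × Fin 3 => B p.1 p.2)
  calc frobInner A B ≤ |frobInner A B| := le_abs_self _
    _ = Real.sqrt ((frobInner A B) ^ 2) := (Real.sqrt_sq_eq_abs _).symm
    _ ≤ Real.sqrt ((∑ p : Fin 3 × Fin 3, (A p.1 p.2) ^ 2) *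
          ∑ p : Fin 3 × Fin 3, (B p.1 p.2) ^ 2) := by
        apply Real.sqrt_le_sqrt; rw [h1]; exact hcs
    _ = frobNorm A * frobNorm B := by
        rw [h2, h3, Real.sqrt_mul (by positivity)]

lemma frobInner_diff_pos {A B : Matrix (Fin 3) (Fin 3) ℝ} (h : A ≠ B) :
    0 < frobInner (A - B) (A - B) := by
  have hex : ∃ i j, A i j ≠ B i j := by
    by_contra hc
    push_neg at hc
    exact h (by ext i j; exact hc i j)
  obtain ⟨i, j, hij⟩ := hex
  rw [frobInner]
  have : frobInner (A - B) (A - B) = ∑ p : Fin 3 × Fin 3,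
      ((A - B) p.1 p.2 * (A - B) p.1 p.2) := by
    rw [frobInner, Fintype.sum_prod_type]
  rw [frobInner] at this
  rw [this]
  apply Finset.sum_pos' (fun p _ => mul_self_nonneg _)
  refine ⟨(i, j), Finset.mem_univ _, ?_⟩
  have h0 : (A - B) i j ≠ 0 := by
    simp only [Matrix.sub_apply]; exact sub_ne_zero.2 hij
  exact lt_of_le_of_ne (mul_self_nonneg _) (Ne.symm (mul_ne_zero h0 h0))

lemma gmono (q : ℝ) (hq : 1 < q) {s t : ℝ} (hs : 0 ≤ s) (hst : s < t) :
    (1 + s) ^ (q - 2) * s < (1 + t) ^ (q - 2) * t := by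
  have h1s : (0:ℝ) < 1 + s := by linarith
  have h1t : (0:ℝ) < 1 + t := by linarith
  have hrw : ∀ u : ℝ, 0 < 1 + u → (1 + u) ^ (q - 2) * u = (1 + u) ^ (q - 1) * (u / (1 + u)) := by
    intro u hu
    rw [show q - 2 = (q - 1) - 1 by ring, Real.rpow_sub hu, Real.rpow_one]
    ring
  rw [hrw s h1s, hrw t h1t]
  have f1 : (1 + s) ^ (q - 1) < (1 + t) ^ (q - 1) :=
    Real.rpow_lt_rpow h1s.le (by linarith) (by linarith)
  have f2 : s / (1 + s) < t / (1 + t) := by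
    rw [div_lt_div_iff₀ h1s h1t]; nlinarith
  exact mul_lt_mul'' f1 f2 (Real.rpow_nonneg h1s.le _) (div_nonneg hs h1s.le)

/-- Strict monotonicity: for `1 < q < ∞`, `(S(A) − S(B)) : (A − B) > 0`
for all symmetric `A ≠ B`. -/
theorem monotonicity_stress (q : ℝ) (hq : 1 < q) :
    ∀ A B : Matrix (Fin 3) (Fin 3) ℝ, A.IsSymm → B.IsSymm → A ≠ B →
      0 < frobInner (stressS q A - stressS q B) (A - B) := by
  intro A B _ _ hne
  set nA := frobNorm A with hnA
  set nB := frobNorm B with hnB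
  set a := (1 + nA) ^ (q - 2) with ha
  set b := (1 + nB) ^ (q - 2) with hb
  have hnA0 : 0 ≤ nA := frobNorm_nonneg A
  have hnB0 : 0 ≤ nB := frobNorm_nonneg B
  have ha0 : 0 < a := Real.rpow_pos_of_pos (by linarith) _
  have hb0 : 0 < b := Real.rpow_pos_of_pos (by linarith) _
  have hE : frobInner (stressS q A - stressS q B) (A - B)
      = a * frobInner A A - (a + b) * frobInner A B + b * frobInner B B := by
    unfold frobInner stressS
    simp only [← ha, ← hb, ← hnA, ← hnB, Matrix.sub_apply, Matrix.smul_apply, smul_eq_mul,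
      Finset.mul_sum, ← Finset.sum_sub_distrib, ← Finset.sum_add_distrib]
    exact Finset.sum_congr rfl fun i _ => Finset.sum_congr rfl fun j _ => by ring
  have hIAA : frobInner A A = nA * nA := frobInner_self A
  have hIBB : frobInner B B = nB * nB := frobInner_self B
  have hCS : frobInner A B ≤ nA * nB := frobInner_le A B
  rw [hE, hIAA, hIBB]
  rcases lt_trichotomy nA nB with h | h | h
  · have hg : a * nA < b * nB := gmono q hq hnA0 h
    have h1 : 0 < (nB - nA) * (b * nB - a * nA) :=
      mul_pos (by linarith) (by linarith)
    nlinarith [mul_le_mul_of_nonneg_left hCS (by positivity : (0:ℝ) ≤ a + b)]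
  · have hab : b = a := by rw [hb, ha, h]
    have hD : 0 < frobInner (A - B) (A - B) := frobInner_diff_pos hne
    have hDexp : frobInner (A - B) (A - B)
        = frobInner A A - 2 * frobInner A B + frobInner B B := by
      unfold frobInner
      simp only [Matrix.sub_apply, Finset.mul_sum, ← Finset.sum_sub_distrib,
        ← Finset.sum_add_distrib]
      exact Finset.sum_congr rfl fun i _ => Finset.sum_congr rfl fun j _ => by ring
    rw [hDexp, hIAA, hIBB, ← h] at hD
    rw [hab, ← h]
    nlinarith [mul_pos ha0 hD]
  · have hg : b * nB < a * nA := gmono q hq hnB0 h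
    have h1 : 0 < (nA - nB) * (a * nA - b * nB) :=
      mul_pos (by linarith) (by linarith)
    nlinarith [mul_le_mul_of_nonneg_left hCS (by positivity : (0:ℝ) ≤ a + b)]
end

section
/- Let Ω ⊂ ℝ³ be a bounded open set and let φᵏ, φ : [0,T] × ℝ³ → ℝ³ be homeomorphisms in the space variable. Suppose φᵏ → φ uniformly on [0,T] × closure(Ω). Let K be a compact subset of the 'moving cylinder' Q := ⋃_{t∈[0,T]} {t} × φ(t,Ω), such that for some δ > 0, K ⊂ ⋃_{t∈[0,T]} {t} × φ(t, Ω_(δ)), where Ω_(δ) := {x ∈ Ω : dist(x,∂Ω) > δ}. Then there exists k₀ such that for all k ≥ k₀, K ⊂ ⋃_{t∈[0,T]} {t} × φᵏ(t, Ω_(δ/2)), provided each φᵏ(t,·)⁻¹ is Lipschitz with a constant uniform in k and t. -/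
/-- For an open set `U ⊆ ℝ³` and `δ > 0`, the set `U_(δ)` of points of `U`
at distance more than `δ` from the boundary. -/
def innerSet (U : Set (EuclideanSpace ℝ (Fin 3))) (δ : ℝ) :
    Set (EuclideanSpace ℝ (Fin 3)) :=
  {x ∈ U | δ < Metric.infDist x (frontier U)}

/-- If `φᵏ → φ` uniformly on `[0,T] × closure Ω`, the inverses `φᵏ(t,·)⁻¹` are
Lipschitz with a constant uniform in `k` and `t`, and a compact set `K` is
contained in `⋃ₜ {t} × φ(t, Ω_(δ))`, then for all large `k`,
`K ⊆ ⋃ₜ {t} × φᵏ(t, Ω_(δ/2))`. -/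
theorem compact_subset_eventually (T δ L : ℝ) (hT : 0 ≤ T) (hδ : 0 < δ) (hL : 0 ≤ L)
    (Ω : Set (EuclideanSpace ℝ (Fin 3))) (hΩo : IsOpen Ω) (hΩb : Bornology.IsBounded Ω)
    (φk : ℕ → ℝ → EuclideanSpace ℝ (Fin 3) → EuclideanSpace ℝ (Fin 3))
    (φ : ℝ → EuclideanSpace ℝ (Fin 3) → EuclideanSpace ℝ (Fin 3))
    (hbijk : ∀ k, ∀ t ∈ Set.Icc (0 : ℝ) T, Function.Bijective (φk k t))
    (hbij : ∀ t ∈ Set.Icc (0 : ℝ) T, Function.Bijective (φ t))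
    (hlipinv : ∀ k, ∀ t ∈ Set.Icc (0 : ℝ) T, ∀ x y,
      dist (Function.invFun (φk k t) x) (Function.invFun (φk k t) y) ≤ L * dist x y)
    (hconv : ∀ ε > (0 : ℝ), ∃ N : ℕ, ∀ k ≥ N, ∀ t ∈ Set.Icc (0 : ℝ) T,
      ∀ x ∈ closure Ω, dist (φk k t x) (φ t x) ≤ ε)
    (K : Set (ℝ × EuclideanSpace ℝ (Fin 3))) (hK : IsCompact K)
    (hKsub : K ⊆ ⋃ t ∈ Set.Icc (0 : ℝ) T, {t} ×ˢ ((φ t) '' innerSet Ω δ)) :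
    ∃ k₀ : ℕ, ∀ k ≥ k₀,
      K ⊆ ⋃ t ∈ Set.Icc (0 : ℝ) T, {t} ×ˢ ((φk k t) '' innerSet Ω (δ / 2)) := by
  have hΩne : Ω ≠ Set.univ := fun h =>
    NormedSpace.unbounded_univ ℝ (EuclideanSpace ℝ (Fin 3)) (h ▸ hΩb)
  obtain ⟨N, hN⟩ := hconv (δ / (2 * (L + 1))) (by positivity)
  refine ⟨N, fun k hk => fun p hp => ?_⟩
  obtain ⟨t, ht⟩ := Set.mem_iUnion.1 (hKsub hp)
  rw [Set.mem_iUnion] at ht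
  obtain ⟨htT, hpmem⟩ := ht
  obtain ⟨hpt, y, hy, hyeq⟩ := hpmem
  simp only [Set.mem_singleton_iff] at hpt
  obtain ⟨hyΩ, hydist⟩ := hy
  -- x' is the preimage of φ t y under φk k t
  set x' := Function.invFun (φk k t) (φ t y) with hx'def
  have hinj := (hbijk k t htT).injective
  have hleft : Function.invFun (φk k t) (φk k t y) = y :=
    Function.leftInverse_invFun hinj y
  have hdxy : dist x' y ≤ δ / 2 := by
    have h1 := hlipinv k t htT (φ t y) (φk k t y)
    rw [hleft] at h1
    have h2 : dist (φk k t y) (φ t y) ≤ δ / (2 * (L + 1)) :=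
      hN k hk t htT y (subset_closure hyΩ)
    rw [dist_comm (φk k t y)] at h2
    calc dist x' y ≤ L * dist (φ t y) (φk k t y) := h1
      _ ≤ L * (δ / (2 * (L + 1))) := by
          exact mul_le_mul_of_nonneg_left h2 hL
      _ ≤ δ / 2 := by
          have hc : δ / (2 * (L + 1)) * (2 * (L + 1)) = δ :=
            div_mul_cancel₀ _ (by positivity)
          nlinarith [hc, div_nonneg hδ.le (by positivity : (0:ℝ) ≤ 2 * (L + 1))]
  have hdxylt : dist x' y < δ := lt_of_le_of_lt hdxy (by linarith)
  -- x' ∈ Ω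
  have hx'Ω : x' ∈ Ω := by
    by_contra hx'
    obtain ⟨z, hz, hzd⟩ := exists_mem_frontier_infDist_compl_eq_dist hyΩ hΩne
    have h1 : Metric.infDist y (frontier Ω) ≤ dist y z := Metric.infDist_le_dist_of_mem hz
    have h2 : Metric.infDist y Ωᶜ ≤ dist y x' := Metric.infDist_le_dist_of_mem hx'
    rw [dist_comm] at hdxylt
    rw [← hzd] at h1
    linarith
  -- infDist bound
  have hinf : δ / 2 < Metric.infDist x' (frontier Ω) := by
    have := Metric.infDist_le_infDist_add_dist (x := y) (y := x') (s := frontier Ω)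
    rw [dist_comm] at this
    linarith
  refine Set.mem_iUnion.2 ⟨t, Set.mem_iUnion.2 ⟨htT, ?_⟩⟩
  refine ⟨hpt, x', ⟨hx'Ω, hinf⟩, ?_⟩
  rw [← hyeq, hx'def]
  exact Function.invFun_eq ((hbijk k t htT).surjective (φ t y))
end
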